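/- Let ρ_n be the measure on 𝕋 with density Π_{j=0}^n (1 + α_j cos(ℓ_j θ)) with respect to dθ/(2π), where α_j ∈ [−1,1] and ℓ_{j+1} ≥ 3ℓ_j. Let N_n = Σ_{j=0}^n ℓ_j and P(z) = Π_{j=0}^n (z^{ℓ_j} − α_j/2), a monic polynomial of degree N_n. Then ∫_𝕋 |P|² dρ_n = Π_{j=0}^n (1 − α_j²/4). Consequently, for the Riesz product ρ = lim ρ_n, e_{N_n}(ρ)² ≤ Π_{j=0}^n (1 − α_j²/4). -/

import Mathlib

open MeasureTheory Complex Polynomial Filter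
open scoped ENNReal NNReal Real

/-- The squared Szegő minimum `e_n(ρ)²`. -/
noncomputable def szegoE2 (ρ : Measure ℂ) (n : ℕ) : ℝ :=
  sInf { x | ∃ q : Polynomial ℂ, q.Monic ∧ q.natDegree = n ∧
    x = ∫ z, ‖q.eval z‖ ^ 2 ∂ρ }

/-- The partial Riesz product `dρ_n(e^{iθ}) = Π_{j=0}^n (1 + α_j cos(ℓ_j θ)) dθ/(2π)`,
pushed forward to the unit circle. -/
noncomputable def rieszPartial (α : ℕ → ℝ) (l : ℕ → ℕ) (n : ℕ) : Measure ℂ :=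
  Measure.map (fun θ : ℝ => Complex.exp (θ * Complex.I))
    ((volume.restrict (Set.Ioc (-Real.pi) Real.pi)).withDensity fun θ =>
      ENNReal.ofReal ((2 * Real.pi)⁻¹ *
        ∏ j ∈ Finset.range (n + 1), (1 + α j * Real.cos (l j * θ))))


private lemma lac_sum {l : ℕ → ℕ} (hl : ∀ j, 0 < l j) (hlac : ∀ j, 3 * l j ≤ l (j + 1)) :
    ∀ m, 2 * ∑ j ∈ Finset.range m, l j < l m := by
  intro m
  induction m with
  | zero => simpa using hl 0
  | succ m ih =>
    rw [Finset.sum_range_succ]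
    have := hlac m
    omega

private lemma coeff_prod_expand {l : ℕ → ℕ} (hl : ∀ j, 0 < l j) (hlac : ∀ j, 3 * l j ≤ l (j + 1))
    (q : ℕ → Polynomial ℂ) (t : ℕ → ℕ) (ht : ∀ j, t j ≤ 2) (hq : ∀ j, (q j).natDegree ≤ 2 * t j) :
    ∀ m, (∏ j ∈ Finset.range m, Polynomial.expand ℂ (l j) (q j)).natDegree
        ≤ 2 * ∑ j ∈ Finset.range m, t j * l j ∧
      (∏ j ∈ Finset.range m, Polynomial.expand ℂ (l j) (q j)).coeff
          (∑ j ∈ Finset.range m, t j * l j)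
        = ∏ j ∈ Finset.range m, (q j).coeff (t j) := by
  intro m
  induction m with
  | zero => simp
  | succ m ih =>
    obtain ⟨hdeg, hcoeff⟩ := ih
    set T := ∑ j ∈ Finset.range m, t j * l j with hT
    have hTle : T ≤ 2 * ∑ j ∈ Finset.range m, l j := by
      rw [Finset.mul_sum]
      exact Finset.sum_le_sum fun j _ => Nat.mul_le_mul_right _ (ht j)
    have hTlt : T < l m := lt_of_le_of_lt hTle (lac_sum hl hlac m)
    rw [Finset.prod_range_succ, Finset.prod_range_succ, Finset.sum_range_succ]
    constructor
    · refine le_trans (Polynomial.natDegree_mul_le) ?_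
      have : (Polynomial.expand ℂ (l m) (q m)).natDegree ≤ 2 * t m * l m := by
        rw [Polynomial.natDegree_expand]
        exact Nat.mul_le_mul_right _ (hq m)
      have he : 2 * t m * l m = 2 * (t m * l m) := Nat.mul_assoc 2 _ _
      omega
    · rw [Polynomial.coeff_mul]
      rw [Finset.sum_eq_single_of_mem (T, t m * l m)]
      · rw [hcoeff, mul_comm (t m) (l m), Polynomial.coeff_expand_mul' (hl m)]
      · rw [Finset.HasAntidiagonal.mem_antidiagonal]
      · rintro ⟨i, j⟩ hij hne
        rw [Finset.HasAntidiagonal.mem_antidiagonal] at hij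
        simp only at hij ⊢
        by_cases hdvd : l m ∣ j
        · obtain ⟨s, rfl⟩ := hdvd
          rw [Nat.mul_comm (t m) (l m)] at hij
          rcases lt_trichotomy s (t m) with hs | hs | hs
          · have h1 : l m * s + l m ≤ l m * t m := by
              rw [← Nat.mul_succ]; exact Nat.mul_le_mul_left _ hs
            have hi : 2 * T < i := by omega
            rw [Polynomial.coeff_eq_zero_of_natDegree_lt (lt_of_le_of_lt hdeg hi), zero_mul]
          · refine absurd ?_ hne
            subst hs
            have : i = T := by omega
            rw [this, Nat.mul_comm]
          · have h1 : l m * t m + l m ≤ l m * s := by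
              rw [← Nat.mul_succ]; exact Nat.mul_le_mul_left _ hs
            omega
        · rw [Polynomial.coeff_expand (hl m), if_neg hdvd, mul_zero]

private lemma integral_exp_int (k : ℤ) :
    ∫ θ in Set.Ioc (-Real.pi) Real.pi, Complex.exp ((k : ℂ) * θ * Complex.I) =
      if k = 0 then (2 * Real.pi : ℂ) else 0 := by
  have hpi : -Real.pi ≤ Real.pi := by linarith [Real.pi_pos]
  rw [← intervalIntegral.integral_of_le hpi]
  rcases eq_or_ne k 0 with hk | hk
  · simp only [hk, Int.cast_zero, zero_mul, Complex.exp_zero, if_pos]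
    rw [intervalIntegral.integral_const]
    push_cast
    ring_nf
    simp [two_mul]
  · rw [if_neg hk]
    have hc : (k : ℂ) * Complex.I ≠ 0 := by
      simp [Complex.ext_iff, hk]
    have harg : ∀ θ : ℝ, (k : ℂ) * θ * Complex.I = (k : ℂ) * Complex.I * θ := fun θ => by ring
    simp_rw [harg]
    rw [integral_exp_mul_complex hc]
    have : Complex.exp ((k:ℂ) * Complex.I * (Real.pi : ℂ)) =
        Complex.exp ((k:ℂ) * Complex.I * ((-Real.pi : ℝ) : ℂ)) := by
      rw [show (k:ℂ) * Complex.I * (Real.pi : ℂ) =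
        (k:ℂ) * Complex.I * ((-Real.pi : ℝ) : ℂ) + (k:ℂ) * (2 * (Real.pi:ℂ) * Complex.I) by
          push_cast; ring]
      rw [Complex.exp_add, Complex.exp_int_mul_two_pi_mul_I, mul_one]
    rw [this, sub_self, zero_div]

private lemma integral_fourier (Q : Polynomial ℂ) (M : ℕ) :
    ∫ θ in Set.Ioc (-Real.pi) Real.pi,
      Complex.exp (-(M : ℂ) * θ * Complex.I) * Q.eval (Complex.exp (θ * Complex.I)) =
      2 * Real.pi * Q.coeff M := by
  set N := max (Q.natDegree + 1) (M + 1) with hN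
  have hev : ∀ θ : ℝ, Q.eval (Complex.exp (θ * Complex.I)) =
      ∑ i ∈ Finset.range N, Q.coeff i * Complex.exp (θ * Complex.I) ^ i := fun θ =>
    Polynomial.eval_eq_sum_range' (lt_of_lt_of_le (Nat.lt_succ_self _) (le_max_left _ _)) _
  simp_rw [hev, Finset.mul_sum]
  have hterm : ∀ i : ℕ, ∀ θ : ℝ,
      Complex.exp (-(M : ℂ) * θ * Complex.I) * (Q.coeff i * Complex.exp (θ * Complex.I) ^ i)
      = Q.coeff i * Complex.exp ((((i : ℤ) - (M : ℤ) : ℤ) : ℂ) * θ * Complex.I) := by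
    intro i θ
    rw [← Complex.exp_nat_mul, ← mul_assoc, mul_comm (Complex.exp _) (Q.coeff i), mul_assoc,
      ← Complex.exp_add]
    congr 2
    push_cast
    ring
  simp_rw [hterm]
  rw [MeasureTheory.integral_finset_sum]
  · have : ∀ i ∈ Finset.range N,
        (∫ θ in Set.Ioc (-Real.pi) Real.pi,
          Q.coeff i * Complex.exp ((((i : ℤ) - (M : ℤ) : ℤ) : ℂ) * θ * Complex.I))
        = Q.coeff i * (if ((i : ℤ) - (M : ℤ) : ℤ) = 0 then (2 * Real.pi : ℂ) else 0) := by
      intro i _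
      rw [MeasureTheory.integral_const_mul, integral_exp_int]
    rw [Finset.sum_congr rfl this]
    rw [Finset.sum_eq_single M]
    · simp [mul_comm]
    · intro i _ hiM
      rw [if_neg (by omega), mul_zero]
    · intro hM
      exact absurd (Finset.mem_range.2 (lt_of_lt_of_le (Nat.lt_succ_self _) (le_max_right _ _))) hM
  · intro i _
    apply Continuous.integrableOn_Ioc
    fun_prop

noncomputable def qBig (a : ℝ) : Polynomial ℂ :=
  Polynomial.C (-(((a : ℂ) / 2) ^ 2)) + Polynomial.C (((a : ℂ) / 2) ^ 3) * Polynomial.X +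
    Polynomial.C (1 - ((a : ℂ) / 2) ^ 2) * Polynomial.X ^ 2 +
    Polynomial.C (((a : ℂ) / 2) ^ 3) * Polynomial.X ^ 3 +
    Polynomial.C (-(((a : ℂ) / 2) ^ 2)) * Polynomial.X ^ 4

noncomputable def qSmall (a : ℝ) : Polynomial ℂ :=
  Polynomial.C ((a : ℂ) / 2) + Polynomial.X + Polynomial.C ((a : ℂ) / 2) * Polynomial.X ^ 2

lemma qBig_natDegree_le (a : ℝ) : (qBig a).natDegree ≤ 4 := by
  unfold qBig; compute_degree

lemma qSmall_natDegree_le (a : ℝ) : (qSmall a).natDegree ≤ 2 := by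
  unfold qSmall; compute_degree

lemma qBig_coeff_two (a : ℝ) : (qBig a).coeff 2 = ((1 - a ^ 2 / 4 : ℝ) : ℂ) := by
  unfold qBig
  simp only [coeff_add, coeff_C_mul, coeff_X_pow, coeff_C, coeff_X]
  norm_num
  push_cast
  ring

lemma qSmall_coeff_one (a : ℝ) : (qSmall a).coeff 1 = 1 := by
  unfold qSmall
  simp only [coeff_add, coeff_C_mul, coeff_X_pow, coeff_C, coeff_X]
  norm_num

lemma pw_big (a c : ℝ) (v : ℂ) (hv : v ≠ 0) (hc : (c : ℂ) = (v + v⁻¹) / 2) :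
    (v - (a : ℂ) / 2) * (v⁻¹ - (a : ℂ) / 2) * ((1 + a * c : ℝ) : ℂ) =
      (v ^ 2)⁻¹ * (qBig a).eval v := by
  unfold qBig
  simp only [eval_add, eval_mul, eval_pow, eval_X, eval_C, Complex.ofReal_add,
    Complex.ofReal_mul, Complex.ofReal_one]
  rw [hc]
  field_simp
  ring

lemma pw_small (a c : ℝ) (v : ℂ) (hv : v ≠ 0) (hc : (c : ℂ) = (v + v⁻¹) / 2) :
    ((1 + a * c : ℝ) : ℂ) = v⁻¹ * (qSmall a).eval v := by
  unfold qSmall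
  simp only [eval_add, eval_mul, eval_pow, eval_X, eval_C, Complex.ofReal_add,
    Complex.ofReal_mul, Complex.ofReal_one]
  rw [hc]
  field_simp
  ring

open Finset in
lemma riesz_integral (α : ℕ → ℝ) (hα : ∀ j, α j ∈ Set.Icc (-1 : ℝ) 1)
    (l : ℕ → ℕ) (hl : ∀ j, 0 < l j) (hlac : ∀ j, 3 * l j ≤ l (j + 1))
    (n m : ℕ) (hnm : n ≤ m) :
    (∫ z, ‖(∏ j ∈ range (n + 1),
        ((Polynomial.X : Polynomial ℂ) ^ (l j) -
          Polynomial.C ((α j : ℂ) / 2))).eval z‖ ^ 2 ∂(rieszPartial α l m)) =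
      ∏ j ∈ range (n + 1), (1 - α j ^ 2 / 4) := by
  set P : Polynomial ℂ := ∏ j ∈ range (n + 1),
    ((Polynomial.X : Polynomial ℂ) ^ (l j) - Polynomial.C ((α j : ℂ) / 2)) with hP
  set w : ℝ → ℝ := fun θ => (2 * Real.pi)⁻¹ *
    ∏ j ∈ range (m + 1), (1 + α j * Real.cos (l j * θ)) with hw
  have hwcont : Continuous w := by
    apply Continuous.mul continuous_const
    exact continuous_finset_prod _ fun j _ => by fun_prop
  have hwnn : ∀ θ, 0 ≤ w θ := by
    intro θ
    apply mul_nonneg (by positivity)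
    apply Finset.prod_nonneg
    intro j _
    have h1 : |α j * Real.cos (l j * θ)| ≤ 1 := by
      rw [abs_mul]
      have h2 := (hα j).1; have h3 := (hα j).2
      exact mul_le_one₀ (abs_le.2 ⟨by linarith, by linarith⟩)
        (abs_nonneg _) (Real.abs_cos_le_one _)
    have := (abs_le.1 h1).1
    linarith
  have hfc : Continuous fun z : ℂ => ‖P.eval z‖ ^ 2 := by fun_prop
  -- step 1: unfold the measure
  rw [rieszPartial, MeasureTheory.integral_map (by fun_prop) hfc.aestronglyMeasurable]
  rw [show (fun θ : ℝ => ENNReal.ofReal ((2 * Real.pi)⁻¹ *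
        ∏ j ∈ Finset.range (m + 1), (1 + α j * Real.cos (l j * θ))))
      = fun θ => ((Real.toNNReal (w θ) : ℝ≥0) : ℝ≥0∞) from rfl]
  rw [integral_withDensity_eq_integral_smul
    (hwcont.measurable.real_toNNReal) _]
  have hsmul : ∀ θ : ℝ, Real.toNNReal (w θ) • ‖P.eval (Complex.exp (θ * Complex.I))‖ ^ 2
      = w θ * ‖P.eval (Complex.exp (θ * Complex.I))‖ ^ 2 := by
    intro θ
    rw [NNReal.smul_def, smul_eq_mul, Real.coe_toNNReal _ (hwnn θ)]
  simp_rw [hsmul]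
  -- the combinatorial data
  set t : ℕ → ℕ := fun j => if j ≤ n then 2 else 1 with ht
  set qq : ℕ → Polynomial ℂ := fun j => if j ≤ n then qBig (α j) else qSmall (α j) with hqq
  set M : ℕ := ∑ j ∈ range (m + 1), t j * l j with hM
  set Q : Polynomial ℂ := ∏ j ∈ range (m + 1), Polynomial.expand ℂ (l j) (qq j) with hQ
  have htle : ∀ j, t j ≤ 2 := fun j => by rw [ht]; dsimp only; split <;> omega
  have hqdeg : ∀ j, (qq j).natDegree ≤ 2 * t j := by
    intro j
    rw [ht, hqq]
    by_cases h : j ≤ n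
    · simpa [h] using qBig_natDegree_le (α j)
    · simpa [h] using qSmall_natDegree_le (α j)
  have hQcoeff : Q.coeff M = ((∏ j ∈ range (n + 1), (1 - α j ^ 2 / 4) : ℝ) : ℂ) := by
    rw [hQ, hM, (coeff_prod_expand hl hlac qq t htle hqdeg (m + 1)).2]
    have h1 : ∀ j ∈ range (m + 1), (qq j).coeff (t j) =
        (if j ≤ n then ((1 - α j ^ 2 / 4 : ℝ) : ℂ) else 1) := by
      intro j _
      rw [hqq, ht]
      by_cases h : j ≤ n
      · simp only [h, if_true]; exact qBig_coeff_two (α j)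
      · simp only [h, if_false]; exact qSmall_coeff_one (α j)
    rw [Finset.prod_congr rfl h1, ← Finset.prod_subset
      (Finset.range_subset_range.2 (by omega : n + 1 ≤ m + 1))
      (fun x _ hx => if_neg (by simp at hx ⊢; omega))]
    rw [Complex.ofReal_prod]
    exact Finset.prod_congr rfl fun j hj => if_pos (by simp at hj; omega)
  -- pointwise identity
  have key : ∀ θ : ℝ, ((w θ * ‖P.eval (Complex.exp (θ * Complex.I))‖ ^ 2 : ℝ) : ℂ) =
      ((2 * Real.pi : ℝ) : ℂ)⁻¹ *
        (Complex.exp (-(M : ℂ) * θ * Complex.I) * Q.eval (Complex.exp (θ * Complex.I))) := by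
    intro θ
    set u : ℂ := Complex.exp (θ * Complex.I) with hu
    have hu0 : u ≠ 0 := Complex.exp_ne_zero _
    have hconju : (starRingEnd ℂ) u = u⁻¹ := by
      rw [hu, ← Complex.exp_conj, map_mul, Complex.conj_ofReal, Complex.conj_I, mul_neg,
        Complex.exp_neg]
    have hns : ((‖P.eval u‖ ^ 2 : ℝ) : ℂ) = P.eval u * (starRingEnd ℂ) (P.eval u) := by
      rw [Complex.mul_conj, Complex.normSq_eq_norm_sq]
    have hevalP : P.eval u = ∏ j ∈ range (n + 1), (u ^ l j - (α j : ℂ) / 2) := by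
      rw [hP]; simp [Polynomial.eval_prod]
    have hconjP : (starRingEnd ℂ) (P.eval u) =
        ∏ j ∈ range (n + 1), ((u⁻¹) ^ l j - (α j : ℂ) / 2) := by
      rw [hevalP, map_prod]
      refine Finset.prod_congr rfl fun j _ => ?_
      rw [map_sub, map_pow, hconju, map_div₀, Complex.conj_ofReal, map_ofNat]
    have hpow : ∀ j : ℕ, u ^ l j = Complex.exp ((l j : ℕ) * (↑θ * Complex.I)) := fun j =>
      (Complex.exp_nat_mul _ _).symm
    have hcos : ∀ j : ℕ, ((Real.cos (l j * θ) : ℝ) : ℂ) = (u ^ l j + (u ^ l j)⁻¹) / 2 := by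
      intro j
      rw [Complex.ofReal_cos, Complex.cos,
        show ((((l j : ℝ) * θ : ℝ)) : ℂ) * Complex.I = (l j : ℕ) * (↑θ * Complex.I) from by
          push_cast; ring,
        show (-(((l j : ℝ) * θ : ℝ) : ℂ)) * Complex.I = -((l j : ℕ) * (↑θ * Complex.I)) from by
          push_cast; ring,
        Complex.exp_neg, ← hpow j]
    have hB : ∏ j ∈ range (n + 1), (u ^ l j - (α j : ℂ) / 2)
        = ∏ j ∈ range (m + 1), (if j ≤ n then u ^ l j - (α j : ℂ) / 2 else 1) := by
      rw [← Finset.prod_subset (Finset.range_subset_range.2 (by omega : n + 1 ≤ m + 1))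
        (fun x _ hx => if_neg (by simp at hx ⊢; omega))]
      exact Finset.prod_congr rfl fun j hj => (if_pos (by simp at hj; omega)).symm
    have hC : ∏ j ∈ range (n + 1), ((u⁻¹) ^ l j - (α j : ℂ) / 2)
        = ∏ j ∈ range (m + 1), (if j ≤ n then (u⁻¹) ^ l j - (α j : ℂ) / 2 else 1) := by
      rw [← Finset.prod_subset (Finset.range_subset_range.2 (by omega : n + 1 ≤ m + 1))
        (fun x _ hx => if_neg (by simp at hx ⊢; omega))]
      exact Finset.prod_congr rfl fun j hj => (if_pos (by simp at hj; omega)).symm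
    have claim : ∀ j ∈ range (m + 1),
        (if j ≤ n then u ^ l j - (α j : ℂ) / 2 else 1) *
          (if j ≤ n then (u⁻¹) ^ l j - (α j : ℂ) / 2 else 1) *
          ((1 + α j * Real.cos (l j * θ) : ℝ) : ℂ)
        = ((u ^ l j) ^ t j)⁻¹ * (qq j).eval (u ^ l j) := by
      intro j _
      by_cases h : j ≤ n
      · simp only [if_pos h, ht, hqq]
        rw [inv_pow]
        simpa [h] using pw_big (α j) (Real.cos (l j * θ)) (u ^ l j)
          (pow_ne_zero _ hu0) (hcos j)
      · simp only [if_neg h, one_mul, ht, hqq]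
        simpa [h] using pw_small (α j) (Real.cos (l j * θ)) (u ^ l j)
          (pow_ne_zero _ hu0) (hcos j)
    have hexpM : Complex.exp (-(M : ℂ) * θ * Complex.I) = (u ^ M)⁻¹ := by
      rw [show (-(M : ℂ) * θ * Complex.I) = -((M : ℕ) * (↑θ * Complex.I)) from by
        push_cast; ring, Complex.exp_neg, Complex.exp_nat_mul, ← hu]
    have hQeval : Q.eval u = ∏ j ∈ range (m + 1), (qq j).eval (u ^ l j) := by
      rw [hQ, Polynomial.eval_prod]
      exact Finset.prod_congr rfl fun j _ => Polynomial.expand_eval _ _ _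
    have hprodpow : ∏ j ∈ range (m + 1), (u ^ l j) ^ t j = u ^ M := by
      rw [hM]
      rw [← Finset.prod_pow_eq_pow_sum]
      exact Finset.prod_congr rfl fun j _ => by rw [← pow_mul, mul_comm (l j) (t j)]
    calc ((w θ * ‖P.eval u‖ ^ 2 : ℝ) : ℂ)
        = ((2 * Real.pi : ℝ) : ℂ)⁻¹ *
            ((∏ j ∈ range (m + 1), ((1 + α j * Real.cos (l j * θ) : ℝ) : ℂ)) *
            ((∏ j ∈ range (m + 1), (if j ≤ n then u ^ l j - (α j : ℂ) / 2 else 1)) *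
             (∏ j ∈ range (m + 1), (if j ≤ n then (u⁻¹) ^ l j - (α j : ℂ) / 2 else 1)))) := by
          rw [hw]
          push_cast [Complex.ofReal_prod]
          rw [← Complex.ofReal_pow, hns, hconjP, hevalP, hB, hC]
          push_cast [Complex.ofReal_prod]
          ring
      _ = ((2 * Real.pi : ℝ) : ℂ)⁻¹ *
            ∏ j ∈ range (m + 1),
              ((if j ≤ n then u ^ l j - (α j : ℂ) / 2 else 1) *
               (if j ≤ n then (u⁻¹) ^ l j - (α j : ℂ) / 2 else 1) *
               ((1 + α j * Real.cos (l j * θ) : ℝ) : ℂ)) := by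
          rw [← Finset.prod_mul_distrib, ← Finset.prod_mul_distrib]
          congr 1
          exact Finset.prod_congr rfl fun j _ => by ring
      _ = ((2 * Real.pi : ℝ) : ℂ)⁻¹ *
            ∏ j ∈ range (m + 1), (((u ^ l j) ^ t j)⁻¹ * (qq j).eval (u ^ l j)) := by
          rw [Finset.prod_congr rfl claim]
      _ = ((2 * Real.pi : ℝ) : ℂ)⁻¹ *
            (Complex.exp (-(M : ℂ) * θ * Complex.I) * Q.eval u) := by
          rw [Finset.prod_mul_distrib, Finset.prod_inv_distrib, hprodpow, hexpM, hQeval]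
  -- final integration
  have h2pi : (2 * Real.pi : ℝ) ≠ 0 := by positivity
  rw [← Complex.ofReal_inj]
  rw [show ((∫ θ in Set.Ioc (-Real.pi) Real.pi,
      w θ * ‖P.eval (Complex.exp (θ * Complex.I))‖ ^ 2 : ℝ) : ℂ)
    = ∫ θ in Set.Ioc (-Real.pi) Real.pi,
      ((w θ * ‖P.eval (Complex.exp (θ * Complex.I))‖ ^ 2 : ℝ) : ℂ) from integral_ofReal.symm]
  calc (∫ θ in Set.Ioc (-Real.pi) Real.pi,
          ((w θ * ‖P.eval (Complex.exp (θ * Complex.I))‖ ^ 2 : ℝ) : ℂ))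
      = ∫ θ in Set.Ioc (-Real.pi) Real.pi, ((2 * Real.pi : ℝ) : ℂ)⁻¹ *
          (Complex.exp (-(M : ℂ) * θ * Complex.I) * Q.eval (Complex.exp (θ * Complex.I))) :=
        MeasureTheory.integral_congr_ae (Filter.Eventually.of_forall key)
    _ = ((2 * Real.pi : ℝ) : ℂ)⁻¹ *
          ∫ θ in Set.Ioc (-Real.pi) Real.pi,
            Complex.exp (-(M : ℂ) * θ * Complex.I) * Q.eval (Complex.exp (θ * Complex.I)) :=
        MeasureTheory.integral_const_mul _ _
    _ = ((2 * Real.pi : ℝ) : ℂ)⁻¹ * (2 * Real.pi * Q.coeff M) := by rw [integral_fourier]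
    _ = ((∏ j ∈ range (n + 1), (1 - α j ^ 2 / 4) : ℝ) : ℂ) := by
        rw [hQcoeff, ← mul_assoc,
          show ((2 * Real.pi : ℝ) : ℂ)⁻¹ * (2 * (Real.pi : ℂ)) = 1 from by
            have : (Real.pi : ℂ) ≠ 0 := Complex.ofReal_ne_zero.2 Real.pi_ne_zero
            push_cast
            field_simp,
          one_mul]

open Finset in
theorem stmt16 (α : ℕ → ℝ) (hα : ∀ j, α j ∈ Set.Icc (-1 : ℝ) 1)
    (l : ℕ → ℕ) (hl : ∀ j, 0 < l j) (hlac : ∀ j, 3 * l j ≤ l (j + 1))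
    (n : ℕ) :
    (∫ z, ‖(∏ j ∈ range (n + 1),
        ((Polynomial.X : Polynomial ℂ) ^ (l j) -
          Polynomial.C ((α j : ℂ) / 2))).eval z‖ ^ 2 ∂(rieszPartial α l n)) =
      (∏ j ∈ range (n + 1), (1 - α j ^ 2 / 4)) ∧
    ∀ ρ : Measure ℂ, IsProbabilityMeasure ρ →
      (∀ f : ℂ → ℝ, Continuous f →
        Filter.Tendsto (fun m => ∫ z, f z ∂(rieszPartial α l m)) Filter.atTop
          (nhds (∫ z, f z ∂ρ))) →
      szegoE2 ρ (∑ j ∈ range (n + 1), l j) ≤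
        ∏ j ∈ range (n + 1), (1 - α j ^ 2 / 4) := by
  set P : Polynomial ℂ := ∏ j ∈ range (n + 1),
    ((Polynomial.X : Polynomial ℂ) ^ (l j) - Polynomial.C ((α j : ℂ) / 2)) with hP
  constructor
  · exact riesz_integral α hα l hl hlac n n le_rfl
  · intro ρ hρ hconv
    have hfc : Continuous fun z : ℂ => ‖P.eval z‖ ^ 2 := by fun_prop
    have h1 := hconv _ hfc
    have h2 : Tendsto (fun m => ∫ z, ‖P.eval z‖ ^ 2 ∂(rieszPartial α l m)) Filter.atTop
        (nhds (∏ j ∈ range (n + 1), (1 - α j ^ 2 / 4))) := by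
      apply Filter.Tendsto.congr' _ tendsto_const_nhds
      filter_upwards [Filter.eventually_ge_atTop n] with m hm
      exact (riesz_integral α hα l hl hlac n m hm).symm
    have hval : ∫ z, ‖P.eval z‖ ^ 2 ∂ρ = ∏ j ∈ range (n + 1), (1 - α j ^ 2 / 4) :=
      tendsto_nhds_unique h1 h2
    have hmono : P.Monic :=
      monic_prod_of_monic _ _ fun j _ => Polynomial.monic_X_pow_sub_C _ (hl j).ne'
    have hdeg : P.natDegree = ∑ j ∈ range (n + 1), l j := by
      rw [hP, Polynomial.natDegree_prod_of_monic _ _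
        (fun j _ => Polynomial.monic_X_pow_sub_C _ (hl j).ne')]
      exact Finset.sum_congr rfl fun j _ => Polynomial.natDegree_X_pow_sub_C
    have hbdd : BddBelow { x | ∃ q : Polynomial ℂ, q.Monic ∧
        q.natDegree = ∑ j ∈ range (n + 1), l j ∧ x = ∫ z, ‖q.eval z‖ ^ 2 ∂ρ } := by
      refine ⟨0, fun x hx => ?_⟩
      obtain ⟨q, -, -, rfl⟩ := hx
      exact integral_nonneg fun z => by positivity
    have hmem : (∫ z, ‖P.eval z‖ ^ 2 ∂ρ) ∈ { x | ∃ q : Polynomial ℂ, q.Monic ∧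
        q.natDegree = ∑ j ∈ range (n + 1), l j ∧ x = ∫ z, ‖q.eval z‖ ^ 2 ∂ρ } :=
      ⟨P, hmono, hdeg, rfl⟩
    have := csInf_le hbdd hmem
    rw [hval] at this
    exact this
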